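/- (Stabilization of the lcm-filtration of the cut ideal of the complete graph.) Let n ≥ 2 and let I_n be the cut ideal of the complete graph K_n, minimally generated by the 2^{n−1} − 1 cut monomials m_{{A,Aᶜ}} over unordered 2-partitions of Fin n. For 1 ≤ j ≤ 2^{n−1} − 1, let I_{n,j} be the j-fold lcm-ideal of I_n, generated by the lcm's of all j-element subsets of the minimal generators. Then for every k with 1 ≤ k ≤ n − 1 and every j with 2^{k−1} ≤ j ≤ 2^k − 1, one has I_{n,j} = P_{n,k+1}, the ideal generated by the partition monomials of all partitions of Fin n into k+1 nonempty blocks; in particular I_{n,2^{k−1}} = I_{n,2^{k−1}+1} = ⋯ = I_{n,2^k − 1} = P_{n,k+1}. -/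

import Mathlib

open MvPolynomial

/-- The edges of the complete graph `K_n`: the 2-element subsets of `Fin n`. -/
abbrev KEdge (n : ℕ) := {e : Finset (Fin n) // e.card = 2}

/-- The support of the partition monomial of a partition `π` of `Fin n`: the edges whose
two endpoints lie in distinct blocks of `π`. -/
def partitionSupport (n : ℕ) (π : Finpartition (Finset.univ : Finset (Fin n))) :
    Finset (KEdge n) :=
  Finset.univ.filter fun e : KEdge n => ∀ b ∈ π.parts, ¬ (e : Finset (Fin n)) ⊆ b

/-- The squarefree monomial with support `S` in the polynomial ring on the edges. -/
noncomputable def edgeMonomial (n : ℕ) (K : Type*) [Field K] (S : Finset (KEdge n)) :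
    MvPolynomial (KEdge n) K :=
  ∏ e ∈ S, X e

/-- `P_{n,s}`: the ideal generated by the partition monomials of all partitions of
`Fin n` into `s` nonempty blocks. -/
noncomputable def partitionIdeal (n : ℕ) (K : Type*) [Field K] (s : ℕ) :
    Ideal (MvPolynomial (KEdge n) K) :=
  Ideal.span {m | ∃ π : Finpartition (Finset.univ : Finset (Fin n)),
    π.parts.card = s ∧ m = edgeMonomial n K (partitionSupport n π)}

/-- The supports of the cut monomials of `K_n`, i.e. of the partition monomials of the
unordered 2-partitions of `Fin n`; these are the minimal generators of the cut ideal
`I_n = P_{n,2}`. -/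
def cutSupports (n : ℕ) : Set (Finset (KEdge n)) :=
  {S | ∃ π : Finpartition (Finset.univ : Finset (Fin n)),
    π.parts.card = 2 ∧ S = partitionSupport n π}

/-- `I_{n,j}`: the `j`-fold lcm-ideal of the cut ideal `I_n`, generated by the lcm's of
all `j`-element subsets of the set of cut monomials (for squarefree monomials, the lcm
has support the union of the supports). -/
noncomputable def cutLcmIdeal (n : ℕ) (K : Type*) [Field K] (j : ℕ) :
    Ideal (MvPolynomial (KEdge n) K) :=
  Ideal.span {m | ∃ σ : Finset (Finset (KEdge n)),
    ↑σ ⊆ cutSupports n ∧ σ.card = j ∧ m = edgeMonomial n K (σ.sup id)}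

section Aux
open Finset

variable {n : ℕ}

/-- Merge two parts of a finpartition. -/
def mergeTwo (ρ : Finpartition (univ : Finset (Fin n))) (b1 b2 : Finset (Fin n))
    (h1 : b1 ∈ ρ.parts) (h2 : b2 ∈ ρ.parts) (hne : b1 ≠ b2) :
    Finpartition (univ : Finset (Fin n)) where
  parts := insert (b1 ∪ b2) ((ρ.parts.erase b1).erase b2)
  supIndep := by
    rw [supIndep_iff_pairwiseDisjoint]
    have hd := ρ.supIndep
    rw [supIndep_iff_pairwiseDisjoint] at hd
    intro x hx y hy hxy
    simp only [coe_insert, Set.mem_insert_iff, mem_coe, mem_erase] at hx hy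
    rcases hx with rfl | ⟨hx2, hx1, hxp⟩ <;> rcases hy with rfl | ⟨hy2, hy1, hyp⟩
    · exact absurd rfl hxy
    · simp only [Function.onFun, id_eq, disjoint_union_left]
      exact ⟨hd h1 hyp (Ne.symm hy1), hd h2 hyp (Ne.symm hy2)⟩
    · simp only [Function.onFun, id_eq, disjoint_union_right]
      exact ⟨hd hxp h1 hx1, hd hxp h2 hx2⟩
    · exact hd hxp hyp hxy
  sup_parts := by
    apply le_antisymm
    · apply Finset.sup_le
      intro b _
      exact le_top
    · conv_lhs => rw [← ρ.sup_parts]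
      apply Finset.sup_le
      intro b hb
      by_cases hb1 : b = b1
      · subst hb1
        exact le_trans subset_union_left (le_sup (f := id) (mem_insert_self _ _))
      by_cases hb2 : b = b2
      · subst hb2
        exact le_trans subset_union_right (le_sup (f := id) (mem_insert_self _ _))
      · exact le_sup (f := id) (mem_insert_of_mem (mem_erase.mpr ⟨hb2, mem_erase.mpr ⟨hb1, hb⟩⟩))
  bot_notMem := by
    simp only [bot_eq_empty, mem_insert, mem_erase, not_or]
    refine ⟨?_, fun h => ρ.bot_notMem h.2.2⟩
    intro h
    obtain ⟨x, hx⟩ := ρ.nonempty_of_mem_parts h1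
    have : x ∈ (∅ : Finset (Fin n)) := h ▸ mem_union_left _ hx
    simp at this

lemma mergeTwo_union_not_mem (ρ : Finpartition (univ : Finset (Fin n))) {b1 b2 : Finset (Fin n)}
    (h1 : b1 ∈ ρ.parts) (h2 : b2 ∈ ρ.parts) (hne : b1 ≠ b2) :
    b1 ∪ b2 ∉ (ρ.parts.erase b1).erase b2 := by
  intro hmem
  have hc := mem_of_mem_erase (mem_of_mem_erase hmem)
  have hdisj := ρ.supIndep
  rw [supIndep_iff_pairwiseDisjoint] at hdisj
  have : Disjoint (b1 ∪ b2) b1 := hdisj hc h1 (ne_of_mem_erase (mem_of_mem_erase hmem))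
  obtain ⟨x, hx⟩ := ρ.nonempty_of_mem_parts h1
  exact (this.forall_ne_finset (mem_union_left _ hx) hx) rfl

lemma mergeTwo_card (ρ : Finpartition (univ : Finset (Fin n))) {b1 b2 : Finset (Fin n)}
    (h1 : b1 ∈ ρ.parts) (h2 : b2 ∈ ρ.parts) (hne : b1 ≠ b2) :
    (mergeTwo ρ b1 b2 h1 h2 hne).parts.card = ρ.parts.card - 1 := by
  rw [show (mergeTwo ρ b1 b2 h1 h2 hne).parts = insert (b1 ∪ b2) ((ρ.parts.erase b1).erase b2) from rfl,
    card_insert_of_notMem (mergeTwo_union_not_mem ρ h1 h2 hne),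
    card_erase_of_mem (mem_erase.mpr ⟨hne.symm, h2⟩), card_erase_of_mem h1]
  have : 2 ≤ ρ.parts.card := one_lt_card.mpr ⟨b1, h1, b2, h2, hne⟩
  omega

lemma mergeTwo_coarsens (ρ : Finpartition (univ : Finset (Fin n))) {b1 b2 : Finset (Fin n)}
    (h1 : b1 ∈ ρ.parts) (h2 : b2 ∈ ρ.parts) (hne : b1 ≠ b2) :
    ∀ b ∈ ρ.parts, ∃ c ∈ (mergeTwo ρ b1 b2 h1 h2 hne).parts, b ⊆ c := by
  intro b hb
  rw [show (mergeTwo ρ b1 b2 h1 h2 hne).parts = insert (b1 ∪ b2) ((ρ.parts.erase b1).erase b2) from rfl]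
  by_cases hb1 : b = b1
  · exact ⟨b1 ∪ b2, mem_insert_self _ _, hb1 ▸ subset_union_left⟩
  by_cases hb2 : b = b2
  · exact ⟨b1 ∪ b2, mem_insert_self _ _, hb2 ▸ subset_union_right⟩
  · exact ⟨b, mem_insert_of_mem (mem_erase.mpr ⟨hb2, mem_erase.mpr ⟨hb1, hb⟩⟩), subset_rfl⟩

lemma exists_coarsening (d : ℕ) :
    ∀ (ρ : Finpartition (univ : Finset (Fin n))) (m : ℕ), 1 ≤ m → ρ.parts.card = m + d →
    ∃ π : Finpartition (univ : Finset (Fin n)),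
      π.parts.card = m ∧ ∀ b ∈ ρ.parts, ∃ c ∈ π.parts, b ⊆ c := by
  induction d with
  | zero => exact fun ρ m _ h => ⟨ρ, by omega, fun b hb => ⟨b, hb, subset_rfl⟩⟩
  | succ d ih =>
    intro ρ m hm hcard
    obtain ⟨b1, h1, b2, h2, hne⟩ := one_lt_card.mp (by omega : 1 < ρ.parts.card)
    obtain ⟨π, hπc, hπ⟩ := ih (mergeTwo ρ b1 b2 h1 h2 hne) m hm
      (by rw [mergeTwo_card]; omega)
    refine ⟨π, hπc, fun b hb => ?_⟩
    obtain ⟨c, hc, hbc⟩ := mergeTwo_coarsens ρ h1 h2 hne b hb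
    obtain ⟨c', hc', hcc'⟩ := hπ c hc
    exact ⟨c', hc', hbc.trans hcc'⟩

lemma edge_rep {n : ℕ} (e : KEdge n) : ∃ x y : Fin n, x ≠ y ∧ (e : Finset (Fin n)) = {x, y} :=
  Finset.card_eq_two.mp e.2

lemma mem_partitionSupport_iff {n : ℕ} {π : Finpartition (Finset.univ : Finset (Fin n))}
    {e : KEdge n} :
    e ∈ partitionSupport n π ↔ ∀ b ∈ π.parts, ¬ (e : Finset (Fin n)) ⊆ b := by
  simp [partitionSupport]

lemma mem_support_iff_part_ne {n : ℕ} {π : Finpartition (Finset.univ : Finset (Fin n))}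
    {e : KEdge n} {x y : Fin n} (he : (e : Finset (Fin n)) = {x, y}) :
    e ∈ partitionSupport n π ↔ π.part x ≠ π.part y := by
  rw [mem_partitionSupport_iff]
  constructor
  · intro h hpart
    refine h (π.part x) (π.part_mem.mpr (Finset.mem_univ x)) ?_
    rw [he, Finset.insert_subset_iff, Finset.singleton_subset_iff]
    exact ⟨π.mem_part (Finset.mem_univ x), hpart ▸ π.mem_part (Finset.mem_univ y)⟩
  · intro h b hb hsub
    rw [he, Finset.insert_subset_iff, Finset.singleton_subset_iff] at hsub
    exact h ((π.part_eq_of_mem hb hsub.1).trans (π.part_eq_of_mem hb hsub.2).symm)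

def twoPart {n : ℕ} (A : Finset (Fin n)) (h1 : A.Nonempty) (h2 : (univ \ A).Nonempty) :
    Finpartition (univ : Finset (Fin n)) where
  parts := {A, univ \ A}
  supIndep := by
    rw [supIndep_iff_pairwiseDisjoint]
    intro x hx y hy hne
    simp only [coe_insert, coe_singleton, Set.mem_insert_iff, Set.mem_singleton_iff] at hx hy
    rcases hx with rfl | rfl <;> rcases hy with rfl | rfl <;>
      first
        | exact absurd rfl hne
        | exact Finset.disjoint_sdiff
        | exact Finset.disjoint_sdiff.symm
  sup_parts := by
    simp only [sup_insert, sup_singleton, id_eq, sup_eq_union]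
    exact union_sdiff_of_subset (subset_univ A)
  bot_notMem := by
    simp only [bot_eq_empty, mem_insert, mem_singleton, not_or]
    exact ⟨fun h => h1.ne_empty h.symm, fun h => h2.ne_empty h.symm⟩

lemma twoPart_parts_card {n : ℕ} {A : Finset (Fin n)} (h1 : A.Nonempty)
    (h2 : (univ \ A).Nonempty) : (twoPart A h1 h2).parts.card = 2 := by
  rw [twoPart]
  rw [card_insert_of_notMem, card_singleton]
  simp only [mem_singleton]
  intro h
  obtain ⟨x, hx⟩ := h1
  have hx' : x ∈ univ \ A := h ▸ hx
  simp only [mem_sdiff] at hx'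
  exact hx'.2 hx

/-- The cut support of `A`: edges with exactly one endpoint in `A`. -/
def cutSup (n : ℕ) (A : Finset (Fin n)) : Finset (KEdge n) :=
  univ.filter fun e : KEdge n =>
    ¬ (e : Finset (Fin n)) ⊆ A ∧ ¬ (e : Finset (Fin n)) ⊆ univ \ A

lemma cutSup_eq {n : ℕ} {A : Finset (Fin n)} (h1 : A.Nonempty) (h2 : (univ \ A).Nonempty) :
    cutSup n A = partitionSupport n (twoPart A h1 h2) := by
  ext e
  have : (twoPart A h1 h2).parts = {A, univ \ A} := rfl
  rw [mem_partitionSupport_iff, this]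
  simp [cutSup]

lemma cutSup_mem_cutSupports {n : ℕ} {A : Finset (Fin n)} (h1 : A.Nonempty)
    (h2 : (univ \ A).Nonempty) : cutSup n A ∈ cutSupports n :=
  ⟨twoPart A h1 h2, twoPart_parts_card h1 h2, cutSup_eq h1 h2⟩

lemma mem_cutSup {n : ℕ} {A : Finset (Fin n)} {e : KEdge n} {x y : Fin n}
    (he : (e : Finset (Fin n)) = {x, y}) :
    e ∈ cutSup n A ↔ (x ∈ A ↔ y ∉ A) := by
  simp only [cutSup, mem_filter, mem_univ, true_and, he, insert_subset_iff,
    singleton_subset_iff, mem_sdiff, not_and]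
  tauto

lemma exists_cover {n k j : ℕ} (hk1 : 1 ≤ k) (hj1 : 2 ^ (k - 1) ≤ j) (hj2 : j ≤ 2 ^ k - 1)
    (π : Finpartition (univ : Finset (Fin n))) (hπ : π.parts.card = k + 1) :
    ∃ σ : Finset (Finset (KEdge n)), ↑σ ⊆ cutSupports n ∧ σ.card = j ∧
      σ.sup id = partitionSupport n π := by
  classical
  obtain ⟨b0, hb0⟩ : π.parts.Nonempty := card_pos.mp (by omega)
  set R := π.parts.erase b0 with hR
  have hRcard : R.card = k := by rw [hR, card_erase_of_mem hb0, hπ]; omega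
  have hRsub : R ⊆ π.parts := erase_subset _ _
  -- basic facts about sups of subsets of R
  have hmemsup : ∀ {T : Finset (Finset (Fin n))} {x : Fin n}, x ∈ T.sup id ↔ ∃ b ∈ T, x ∈ b := by
    intro T x; exact Finset.mem_sup
  have hb0disj : ∀ {T : Finset (Finset (Fin n))}, T ⊆ R → ∀ y ∈ b0, y ∉ T.sup id := by
    intro T hT y hy hmem
    obtain ⟨b, hbT, hyb⟩ := hmemsup.mp hmem
    exact (mem_erase.mp (hT hbT)).1 (π.eq_of_mem_parts (hRsub (hT hbT)) hb0 hyb hy)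
  have houtside : ∀ {T : Finset (Finset (Fin n))}, T ⊆ R → ∀ {b}, b ∈ π.parts → b ∉ T →
      ∀ y ∈ b, y ∉ T.sup id := by
    intro T hT b hbp hbT y hy hmem
    obtain ⟨c, hcT, hyc⟩ := hmemsup.mp hmem
    exact hbT ((π.eq_of_mem_parts hbp (hRsub (hT hcT)) hy hyc) ▸ hcT)
  have hsub : ∀ {T : Finset (Finset (Fin n))}, T ⊆ R →
      cutSup n (T.sup id) ⊆ partitionSupport n π := by
    intro T hT e he
    rw [mem_partitionSupport_iff]
    intro b hb hsubb
    simp only [cutSup, mem_filter] at he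
    obtain ⟨-, h1, h2⟩ := he
    by_cases hbT : b ∈ T
    · exact h1 (hsubb.trans (le_sup (f := id) hbT))
    · refine h2 (hsubb.trans ?_)
      intro y hy
      simp only [mem_sdiff, mem_univ, true_and]
      exact houtside hT hb hbT y hy
  have hAne : ∀ {T : Finset (Finset (Fin n))}, T ⊆ R → T.Nonempty → (T.sup id).Nonempty := by
    intro T hT ⟨b, hb⟩
    obtain ⟨x, hx⟩ := π.nonempty_of_mem_parts (hRsub (hT hb))
    exact ⟨x, hmemsup.mpr ⟨b, hb, hx⟩⟩
  have hcompl : ∀ {T : Finset (Finset (Fin n))}, T ⊆ R → (univ \ T.sup id).Nonempty := by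
    intro T hT
    obtain ⟨y, hy⟩ := π.nonempty_of_mem_parts hb0
    exact ⟨y, mem_sdiff.mpr ⟨mem_univ y, hb0disj hT y hy⟩⟩
  have hinj' : ∀ T, T ⊆ R → ∀ T', T' ⊆ R → ∀ b ∈ T, b ∉ T' →
      cutSup n (T.sup id) ≠ cutSup n (T'.sup id) := by
    intro T hT T' hT' b hbT hbT' heq
    obtain ⟨x, hx⟩ := π.nonempty_of_mem_parts (hRsub (hT hbT))
    obtain ⟨y, hy⟩ := π.nonempty_of_mem_parts hb0
    have hxy : x ≠ y := fun h =>
      (mem_erase.mp (hT hbT)).1 (π.eq_of_mem_parts (hRsub (hT hbT)) hb0 hx (h ▸ hy))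
    have hxT : x ∈ T.sup id := hmemsup.mpr ⟨b, hbT, hx⟩
    have h1 : (⟨{x, y}, card_pair hxy⟩ : KEdge n) ∈ cutSup n (T.sup id) :=
      (mem_cutSup rfl).mpr ⟨fun _ => hb0disj hT y hy, fun _ => hxT⟩
    rw [heq, mem_cutSup rfl] at h1
    exact houtside hT' (hRsub (hT hbT)) hbT' x hx (h1.mpr (hb0disj hT' y hy))
  -- choose the family F of nonempty subsets of R
  have hsingles : R.image (fun b => ({b} : Finset (Finset (Fin n)))) ⊆ R.powerset.erase ∅ := by
    intro T hT
    obtain ⟨b, hb, rfl⟩ := mem_image.mp hT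
    exact mem_erase.mpr ⟨singleton_ne_empty b, mem_powerset.mpr (singleton_subset_iff.mpr hb)⟩
  have hsinglescard : (R.image (fun b => ({b} : Finset (Finset (Fin n))))).card = k := by
    rw [card_image_of_injective _ (fun a b h => singleton_injective h), hRcard]
  have htcard : (R.powerset.erase ∅).card = 2 ^ k - 1 := by
    rw [card_erase_of_mem (mem_powerset.mpr (empty_subset R)), card_powerset, hRcard]
  have hkj : k ≤ j := by
    have := Nat.lt_two_pow_self (n := k - 1)
    omega
  obtain ⟨F, hFs, hFt, hFcard⟩ := exists_subsuperset_card_eq (n := j) hsingles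
    (hsinglescard ▸ hkj) (htcard ▸ hj2)
  have hFR : ∀ {T}, T ∈ F → T ⊆ R ∧ T.Nonempty := by
    intro T hT
    have := mem_erase.mp (hFt hT)
    exact ⟨mem_powerset.mp this.2, nonempty_iff_ne_empty.mpr this.1⟩
  refine ⟨F.image (fun T => cutSup n (T.sup id)), ?_, ?_, ?_⟩
  · intro S hS
    obtain ⟨T, hT, rfl⟩ := mem_image.mp (by exact_mod_cast hS)
    exact cutSup_mem_cutSupports (hAne (hFR hT).1 (hFR hT).2) (hcompl (hFR hT).1)
  · rw [card_image_of_injOn, hFcard]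
    intro T hT T' hT' heq
    by_contra hne
    rcases not_and_or.mp (fun h : T ⊆ T' ∧ T' ⊆ T => hne (subset_antisymm h.1 h.2)) with h | h
    · obtain ⟨b, hb, hb'⟩ := not_subset.mp h
      exact hinj' T (hFR hT).1 T' (hFR hT').1 b hb hb' heq
    · obtain ⟨b, hb, hb'⟩ := not_subset.mp h
      exact hinj' T' (hFR hT').1 T (hFR hT).1 b hb hb' heq.symm
  · apply subset_antisymm
    · intro e he
      obtain ⟨S, hS, heS⟩ := Finset.mem_sup.mp he
      obtain ⟨T, hT, rfl⟩ := mem_image.mp hS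
      exact hsub (hFR hT).1 heS
    · intro e he
      obtain ⟨x, y, hxy, hexy⟩ := edge_rep e
      have hne := (mem_support_iff_part_ne hexy).mp he
      have hx : x ∈ π.part x := π.mem_part (mem_univ x)
      have hy : y ∈ π.part y := π.mem_part (mem_univ y)
      by_cases hbx0 : π.part x = b0
      · have hby0 : π.part y ≠ b0 := fun h => hne (hbx0.trans h.symm)
        have hxpy : x ∉ π.part y := fun h => hne (π.part_eq_of_mem (π.part_mem.mpr (mem_univ y)) h)
        refine Finset.mem_sup.mpr ⟨cutSup n (({π.part y} : Finset (Finset (Fin n))).sup id),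
          mem_image.mpr ⟨{π.part y},
            hFs (mem_image.mpr ⟨π.part y, mem_erase.mpr ⟨hby0, π.part_mem.mpr (mem_univ y)⟩, rfl⟩),
            rfl⟩, ?_⟩
        rw [sup_singleton]
        exact (mem_cutSup hexy).mpr ⟨fun h => absurd h hxpy, fun h => absurd hy h⟩
      · have hypx : y ∉ π.part x := fun h =>
          hne (π.part_eq_of_mem (π.part_mem.mpr (mem_univ x)) h).symm
        refine Finset.mem_sup.mpr ⟨cutSup n (({π.part x} : Finset (Finset (Fin n))).sup id),
          mem_image.mpr ⟨{π.part x},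
            hFs (mem_image.mpr ⟨π.part x, mem_erase.mpr ⟨hbx0, π.part_mem.mpr (mem_univ x)⟩, rfl⟩),
            rfl⟩, ?_⟩
        rw [sup_singleton]
        exact (mem_cutSup hexy).mpr ⟨fun _ => hypx, fun _ => hx⟩

lemma support_anti {n : ℕ} {π ρ : Finpartition (Finset.univ : Finset (Fin n))}
    (h : ∀ b ∈ ρ.parts, ∃ c ∈ π.parts, b ⊆ c) :
    partitionSupport n π ⊆ partitionSupport n ρ := by
  intro e he
  rw [mem_partitionSupport_iff] at he ⊢
  intro b hb hsub
  obtain ⟨c, hc, hbc⟩ := h b hb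
  exact he c hc (hsub.trans hbc)

lemma two_part_ne_iff {n : ℕ} {π' : Finpartition (univ : Finset (Fin n))}
    (hc : π'.parts.card = 2) (v0 x y : Fin n) :
    π'.part x ≠ π'.part y ↔ ¬ (x ∈ π'.part v0 ↔ y ∈ π'.part v0) := by
  have hx := π'.mem_part_iff_part_eq_part (mem_univ x) (mem_univ v0)
  have hy := π'.mem_part_iff_part_eq_part (mem_univ y) (mem_univ v0)
  obtain ⟨P, Q, hPQ, hparts⟩ := Finset.card_eq_two.mp hc
  have hmx : π'.part x = P ∨ π'.part x = Q := by
    have := π'.part_mem.mpr (mem_univ x); rw [hparts] at this; simpa using this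
  have hmy : π'.part y = P ∨ π'.part y = Q := by
    have := π'.part_mem.mpr (mem_univ y); rw [hparts] at this; simpa using this
  have hmv : π'.part v0 = P ∨ π'.part v0 = Q := by
    have := π'.part_mem.mpr (mem_univ v0); rw [hparts] at this; simpa using this
  rw [hx, hy]
  rcases hmx with h1 | h1 <;> rcases hmy with h2 | h2 <;> rcases hmv with h3 | h3 <;>
    rw [h1, h2, h3] <;> simp [hPQ, hPQ.symm] <;> tauto

lemma exists_refinement {n : ℕ} (hn : 1 ≤ n) (σ : Finset (Finset (KEdge n)))
    (hσ : ↑σ ⊆ cutSupports n) :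
    ∃ ρ : Finpartition (univ : Finset (Fin n)),
      partitionSupport n ρ = σ.sup id ∧ σ.card ≤ 2 ^ (ρ.parts.card - 1) - 1 := by
  classical
  -- choose a 2-partition for each cut support
  have hchoice : ∀ S ∈ σ, ∃ π' : Finpartition (univ : Finset (Fin n)),
      π'.parts.card = 2 ∧ S = partitionSupport n π' := fun S hS => hσ hS
  set πof : Finset (KEdge n) → Finpartition (univ : Finset (Fin n)) := fun S =>
    if h : S ∈ cutSupports n then h.choose else ⊥ with hπofdef
  have hπof : ∀ S ∈ σ, (πof S).parts.card = 2 ∧ S = partitionSupport n (πof S) := by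
    intro S hS
    have h : S ∈ cutSupports n := hσ hS
    simp only [hπofdef, dif_pos h]
    exact h.choose_spec
  -- the common refinement as a setoid
  set r : Setoid (Fin n) := ⟨fun x y => ∀ S ∈ σ, (πof S).part x = (πof S).part y,
    ⟨fun _ _ _ => rfl, fun h S hS => (h S hS).symm, fun h h' S hS => (h S hS).trans (h' S hS)⟩⟩
    with hrdef
  haveI : DecidableRel r.r := fun _ _ => Classical.dec _
  set ρ : Finpartition (univ : Finset (Fin n)) := Finpartition.ofSetoid r with hρdef
  have hpart : ∀ x y : Fin n, ρ.part x = ρ.part y ↔ r.r x y := by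
    intro x y
    have hmem := ρ.mem_part_iff_part_eq_part (mem_univ y) (mem_univ x)
    have hrel : y ∈ ρ.part x ↔ r.r x y := Finpartition.mem_part_ofSetoid_iff_rel
    exact ⟨fun h => hrel.mp (hmem.mpr h.symm), fun h => (hmem.mp (hrel.mpr h)).symm⟩
  have hsupp : partitionSupport n ρ = σ.sup id := by
    ext e
    obtain ⟨x, y, hxy, he⟩ := edge_rep e
    rw [mem_support_iff_part_ne he, Finset.mem_sup]
    rw [ne_eq, hpart]
    constructor
    · intro h
      obtain ⟨S, hS, hne⟩ : ∃ S ∈ σ, (πof S).part x ≠ (πof S).part y := by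
        by_contra hc
        push_neg at hc
        exact h (fun S hS => hc S hS)
      exact ⟨S, hS, by rw [id_eq, (hπof S hS).2, mem_support_iff_part_ne he]; exact hne⟩
    · rintro ⟨S, hS, heS⟩ h
      rw [id_eq, (hπof S hS).2, mem_support_iff_part_ne he] at heS
      exact heS (h S hS)
  refine ⟨ρ, hsupp, ?_⟩
  -- cardinality bound via injection into proper subsets of parts avoiding the base part
  set v0 : Fin n := ⟨0, hn⟩ with hv0
  set b0 : Finset (Fin n) := ρ.part v0 with hb0
  have hb0mem : b0 ∈ ρ.parts := ρ.part_mem.mpr (mem_univ v0)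
  set tgt : Finset (Finset (Finset (Fin n))) :=
    (ρ.parts.erase b0).powerset.erase (ρ.parts.erase b0) with htgt
  have htgtcard : tgt.card = 2 ^ (ρ.parts.card - 1) - 1 := by
    rw [htgt, card_erase_of_mem (mem_powerset_self _), card_powerset,
      card_erase_of_mem hb0mem]
  rw [← htgtcard]
  -- claim A : the block of x is inside (πof S).part v0 iff x is
  have claimA : ∀ S ∈ σ, ∀ x : Fin n,
      (ρ.part x ⊆ (πof S).part v0 ↔ (πof S).part x = (πof S).part v0) := by
    intro S hS x
    constructor
    · intro h
      exact ((πof S).mem_part_iff_part_eq_part (mem_univ x) (mem_univ v0)).mp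
        (h (ρ.mem_part (mem_univ x)))
    · intro h w hw
      have hrw : r.r x w := (hpart x w).mp
        ((ρ.mem_part_iff_part_eq_part (mem_univ w) (mem_univ x)).mp hw).symm
      have : (πof S).part w = (πof S).part v0 := (hrw S hS).symm.trans h
      exact this ▸ (πof S).mem_part (mem_univ w)
  set U : Finset (KEdge n) → Finset (Finset (Fin n)) := fun S =>
    (ρ.parts.filter fun b => b ⊆ (πof S).part v0).erase b0 with hU
  have hb0filter : ∀ S ∈ σ, b0 ∈ ρ.parts.filter fun b => b ⊆ (πof S).part v0 := by
    intro S hS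
    exact mem_filter.mpr ⟨hb0mem, (claimA S hS v0).mpr rfl⟩
  have hUmem : ∀ S ∈ σ, ∀ x : Fin n,
      (ρ.part x ∈ U S ∨ ρ.part x = b0) ↔ (πof S).part x = (πof S).part v0 := by
    intro S hS x
    rw [hU]
    constructor
    · rintro (h | h)
      · exact (claimA S hS x).mp (mem_filter.mp (mem_of_mem_erase h)).2
      · exact (claimA S hS x).mp (h ▸ (claimA S hS v0).mpr rfl)
    · intro h
      by_cases hx0 : ρ.part x = b0
      · exact Or.inr hx0
      · exact Or.inl (mem_erase.mpr ⟨hx0,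
          mem_filter.mpr ⟨ρ.part_mem.mpr (mem_univ x), (claimA S hS x).mpr h⟩⟩)
  apply card_le_card_of_injOn U
  · intro S hS
    rw [htgt, mem_coe, mem_erase, mem_powerset]
    constructor
    · intro hcontra
      obtain ⟨B, hB, hBne⟩ :=
        exists_mem_ne ((hπof S hS).1 ▸ one_lt_two) ((πof S).part v0)
      obtain ⟨w, hw⟩ := (πof S).nonempty_of_mem_parts hB
      have hBw : (πof S).part w = B := (πof S).part_eq_of_mem hB hw
      have hwne : (πof S).part w ≠ (πof S).part v0 := fun h => hBne (hBw ▸ h)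
      have h1 : ρ.part w ∉ U S := fun hmem => hwne ((hUmem S hS w).mp (Or.inl hmem))
      have h2 : ρ.part w ≠ b0 := fun hmem => hwne ((hUmem S hS w).mp (Or.inr hmem))
      exact h1 (hcontra ▸ mem_erase.mpr ⟨h2, ρ.part_mem.mpr (mem_univ w)⟩)
    · intro b hb
      rw [hU, mem_erase, mem_filter] at hb
      exact mem_erase.mpr ⟨hb.1, hb.2.1⟩
  · intro S hS S' hS' heq
    rw [mem_coe] at hS hS'
    have hAeq : ∀ x : Fin n,
        ((πof S).part x = (πof S).part v0 ↔ (πof S').part x = (πof S').part v0) := by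
      intro x
      rw [← hUmem S hS x, ← hUmem S' hS' x, heq]
    have hmemA : ∀ x : Fin n, (x ∈ (πof S).part v0 ↔ x ∈ (πof S').part v0) := by
      intro x
      rw [(πof S).mem_part_iff_part_eq_part (mem_univ x) (mem_univ v0),
        (πof S').mem_part_iff_part_eq_part (mem_univ x) (mem_univ v0)]
      exact hAeq x
    rw [(hπof S hS).2, (hπof S' hS').2]
    ext e
    obtain ⟨x, y, hxy, he⟩ := edge_rep e
    rw [mem_support_iff_part_ne he, mem_support_iff_part_ne he,
      two_part_ne_iff (hπof S hS).1 v0, two_part_ne_iff (hπof S' hS').1 v0,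
      hmemA x, hmemA y]

end Aux

/-- Stabilization of the lcm-filtration of the cut ideal of the complete graph `K_n`
(Theorem 3.1 of [FEH2]): for `1 ≤ k ≤ n − 1` and `2^{k−1} ≤ j ≤ 2^k − 1`, the `j`-fold
lcm-ideal of the cut ideal equals `P_{n,k+1}`; in particular
`I_{n,2^{k−1}} = I_{n,2^{k−1}+1} = ⋯ = I_{n,2^k−1} = P_{n,k+1}`. -/
theorem cut_ideal_lcm_filtration_stabilizes (n : ℕ) (hn : 2 ≤ n)
    (K : Type*) [Field K] (k j : ℕ) (hk1 : 1 ≤ k) (hk2 : k ≤ n - 1)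
    (hj1 : 2 ^ (k - 1) ≤ j) (hj2 : j ≤ 2 ^ k - 1) :
    cutLcmIdeal n K j = partitionIdeal n K (k + 1) := by
  classical
  apply le_antisymm
  · rw [cutLcmIdeal]
    apply Ideal.span_le.mpr
    rintro m ⟨σ, hσsub, hσcard, rfl⟩
    simp only [SetLike.mem_coe]
    obtain ⟨ρ, hρsupp, hρcard⟩ := exists_refinement (by omega) σ hσsub
    have hj' : j ≤ 2 ^ (ρ.parts.card - 1) - 1 := hσcard ▸ hρcard
    have hpos : 0 < 2 ^ (ρ.parts.card - 1) := Nat.pow_pos (by norm_num)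
    have hpow : 2 ^ (k - 1) < 2 ^ (ρ.parts.card - 1) :=
      lt_of_le_of_lt (hj1.trans hj') (Nat.sub_lt hpos one_pos)
    have hks : k - 1 < ρ.parts.card - 1 := (Nat.pow_lt_pow_iff_right one_lt_two).mp hpow
    obtain ⟨π, hπcard, hπcoarse⟩ :=
      exists_coarsening (ρ.parts.card - (k + 1)) ρ (k + 1) (by omega) (by omega)
    have hsub2 : partitionSupport n π ⊆ σ.sup id := hρsupp ▸ support_anti hπcoarse
    have hfac : edgeMonomial n K (σ.sup id) =
        edgeMonomial n K (σ.sup id \ partitionSupport n π) *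
          edgeMonomial n K (partitionSupport n π) := by
      rw [edgeMonomial, edgeMonomial, edgeMonomial, Finset.prod_sdiff hsub2]
    rw [hfac, partitionIdeal]
    exact Ideal.mul_mem_left _ _ (Ideal.subset_span ⟨π, hπcard, rfl⟩)
  · rw [partitionIdeal]
    apply Ideal.span_le.mpr
    rintro m ⟨π, hπcard, rfl⟩
    simp only [SetLike.mem_coe]
    obtain ⟨σ, h1, h2, h3⟩ := exists_cover hk1 hj1 hj2 π hπcard
    rw [cutLcmIdeal]
    exact Ideal.subset_span ⟨σ, h1, h2, by rw [h3]⟩
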